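/- Let V ∈ ℝⁿ have strictly positive entries, let A be a real n × n matrix with xᵀ·A·x ≤ 0 for all x ∈ ℝⁿ, let B_pr be a real n × m matrix, B_c a real n × k matrix, and P_c ∈ ℝᵏ a constant vector. Let T̄ ∈ ℝⁿ and P̄ ∈ ℝᵐ satisfy the equilibrium relation 0 = A·T̄ + B_pr·P̄ − B_c·P_c. Suppose T : ℝ → ℝⁿ is differentiable and P : ℝ → ℝᵐ satisfies diag(V)·T′(t) = A·T(t) + B_pr·P(t) − B_c·P_c for all t. Then the storage function H(t) = ½·(T(t) − T̄)ᵀ·diag(V)·(T(t) − T̄) is differentiable and satisfies H′(t) ≤ (B_prᵀ·(T(t) − T̄))ᵀ·(P(t) − P̄) for all t, i.e. the thermal dynamics are shifted passive with input P and passive output B_prᵀ·(T − T̄). -/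

import Mathlib

open Matrix

/-- Theorem 4 of the paper (shifted passivity of the thermal dynamics): with
strictly positive volumes `V`, a negative-semidefinite coefficient matrix `A`,
constant consumer demand `P_c`, an equilibrium pair `(T̄, P̄)` of
`diag(V) Ṫ = A T + B_pr P − B_c P_c`, and a solution `T` with input `P`, the
shifted ectropy `H(t) = ½ (T t − T̄)ᵀ diag(V) (T t − T̄)` is differentiable and
satisfies `H′(t) ≤ (B_prᵀ (T t − T̄))ᵀ (P t − P̄)`. -/
theorem thermal_dynamics_shifted_passive (n m k : ℕ)
    (V : Fin n → ℝ) (hV : ∀ i, 0 < V i)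
    (A : Matrix (Fin n) (Fin n) ℝ)
    (hA : ∀ x : Fin n → ℝ, x ⬝ᵥ A.mulVec x ≤ 0)
    (Bpr : Matrix (Fin n) (Fin m) ℝ) (Bc : Matrix (Fin n) (Fin k) ℝ)
    (Pc : Fin k → ℝ) (Tbar : Fin n → ℝ) (Pbar : Fin m → ℝ)
    (heq : (0 : Fin n → ℝ) = A.mulVec Tbar + Bpr.mulVec Pbar - Bc.mulVec Pc)
    (T T' : ℝ → Fin n → ℝ) (P : ℝ → Fin m → ℝ)
    (hT : ∀ t, HasDerivAt T (T' t) t)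
    (hdyn : ∀ t, (Matrix.diagonal V).mulVec (T' t) =
      A.mulVec (T t) + Bpr.mulVec (P t) - Bc.mulVec Pc) :
    ∀ t : ℝ,
      DifferentiableAt ℝ
        (fun s => (1 / 2 : ℝ) *
          ((T s - Tbar) ⬝ᵥ (Matrix.diagonal V).mulVec (T s - Tbar))) t ∧
      deriv (fun s => (1 / 2 : ℝ) *
          ((T s - Tbar) ⬝ᵥ (Matrix.diagonal V).mulVec (T s - Tbar))) t ≤
        (Bpr.transpose.mulVec (T t - Tbar)) ⬝ᵥ (P t - Pbar) := by
  intro t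
  have hx : ∀ i, HasDerivAt (fun s => T s i - Tbar i) (T' t i) t :=
    fun i => ((hasDerivAt_pi.mp (hT t)) i).sub_const _
  -- rewrite the storage function as a finite sum
  have hfun : (fun s => (1 / 2 : ℝ) *
      ((T s - Tbar) ⬝ᵥ (Matrix.diagonal V).mulVec (T s - Tbar)))
      = fun s => (1 / 2 : ℝ) * ∑ i, (T s i - Tbar i) * (V i * (T s i - Tbar i)) := by
    funext s
    simp [dotProduct, Matrix.mulVec_diagonal]
  have hsum : HasDerivAt
      (fun s => (1 / 2 : ℝ) * ∑ i, (T s i - Tbar i) * (V i * (T s i - Tbar i)))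
      ((1 / 2 : ℝ) * ∑ i, (T' t i * (V i * (T t i - Tbar i))
        + (T t i - Tbar i) * (V i * T' t i))) t := by
    refine HasDerivAt.const_mul _ ?_
    refine HasDerivAt.fun_sum fun i _ => ?_
    exact (hx i).mul ((hx i).const_mul (V i))
  have hval : (1 / 2 : ℝ) * ∑ i, (T' t i * (V i * (T t i - Tbar i))
        + (T t i - Tbar i) * (V i * T' t i))
      = (T t - Tbar) ⬝ᵥ (Matrix.diagonal V).mulVec (T' t) := by
    simp only [dotProduct, Matrix.mulVec_diagonal, Pi.sub_apply,
      Finset.mul_sum]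
    refine Finset.sum_congr rfl fun i _ => ?_
    ring
  have hH : HasDerivAt (fun s => (1 / 2 : ℝ) *
      ((T s - Tbar) ⬝ᵥ (Matrix.diagonal V).mulVec (T s - Tbar)))
      ((T t - Tbar) ⬝ᵥ (Matrix.diagonal V).mulVec (T' t)) t := by
    rw [hfun, ← hval]; exact hsum
  refine ⟨hH.differentiableAt, ?_⟩
  rw [hH.deriv]
  have hdyn' : (Matrix.diagonal V).mulVec (T' t)
      = A.mulVec (T t - Tbar) + Bpr.mulVec (P t - Pbar) := by
    have h := hdyn t
    have h2 : Bc.mulVec Pc = A.mulVec Tbar + Bpr.mulVec Pbar := by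
      have := heq; linear_combination (norm := module) this
    rw [Matrix.mulVec_sub, Matrix.mulVec_sub, h, h2]
    module
  rw [hdyn', dotProduct_add]
  have hBpr : (T t - Tbar) ⬝ᵥ Bpr.mulVec (P t - Pbar)
      = (Bpr.transpose.mulVec (T t - Tbar)) ⬝ᵥ (P t - Pbar) := by
    rw [Matrix.dotProduct_mulVec, Matrix.mulVec_transpose]
  rw [hBpr]
  have := hA (T t - Tbar)
  linarith
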